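/- The rank-one free left module OPol_n(α) with cyclic vector 1_α and differential d(1_α) = Σ_i α_i x_i 1_α satisfies d² = 0 if and only if every component α_i lies in {0,1}. -/

import Mathlib

/-- Let `A` be the skew polynomial superalgebra
`OPol_n = k⟨x_1,…,x_n⟩/(x_i x_j + x_j x_i, i ≠ j)` over a commutative domain `R`,
presented abstractly: `x i` are odd anticommuting generators (with the squares
`x i ^ 2` linearly independent, as holds in `OPol_n`), `ι` is the parity
involution and `d` the odd derivation with `d (x i) = x i ^ 2`.  For `α ∈ Rⁿ`
the rank-one free left module `OPol_n(α)` with cyclic vector `1_α` and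
`d(f·1_α) = (d f + ι f · Σ α_i x_i)·1_α` satisfies `d² = 0` if and only if
every `α i` lies in `{0,1}`. -/
theorem stmt0 {R A : Type*} [CommRing R] [IsDomain R] [Ring A] [Algebra R A]
    {n : ℕ} (x : Fin n → A)
    (hxx : ∀ i j, i ≠ j → x i * x j = -(x j * x i))
    (hli : LinearIndependent R fun i => x i ^ 2)
    (ι : A →ₐ[R] A) (hιx : ∀ i, ι (x i) = -x i) (hιι : ∀ a, ι (ι a) = a)
    (d : A → A)
    (hd_add : ∀ a b, d (a + b) = d a + d b)
    (hd_smul : ∀ (c : R) (a : A), d (c • a) = c • d a)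
    (hd_leib : ∀ a b, d (a * b) = d a * b + ι a * d b)
    (hdx : ∀ i, d (x i) = x i ^ 2)
    (hdd : ∀ a, d (d a) = 0)
    (hdι : ∀ a, d (ι a) = -ι (d a))
    (α : Fin n → R) :
    (∀ f : A,
        d (d f + ι f * ∑ i, α i • x i) +
          ι (d f + ι f * ∑ i, α i • x i) * ∑ i, α i • x i = 0)
      ↔ ∀ i, α i = 0 ∨ α i = 1 := by
  classical
  set s : A := ∑ i, α i • x i with hs
  -- bundle d as a linear map to push through sums
  let dL : A →ₗ[R] A := { toFun := d, map_add' := hd_add, map_smul' := hd_smul }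
  have hds : d s = ∑ i, α i • x i ^ 2 := by
    show dL s = _
    rw [hs, map_sum]
    simp only [map_smul]
    exact Finset.sum_congr rfl fun i _ => by simp [dL, hdx i]
  have hιs : ι s = -s := by
    rw [hs, map_sum, ← Finset.sum_neg_distrib]
    exact Finset.sum_congr rfl fun i _ => by rw [map_smul, hιx, smul_neg]
  have hss : s * s = ∑ i, (α i * α i) • x i ^ 2 := by
    rw [hs, Finset.sum_mul_sum]
    have hterm : ∀ i j : Fin n, (α i • x i) * (α j • x j) = (α i * α j) • (x i * x j) := by
      intro i j; rw [smul_mul_smul_comm]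
    have : (∑ i, ∑ j, (α i • x i) * (α j • x j))
        = ∑ p ∈ (Finset.univ ×ˢ Finset.univ : Finset (Fin n × Fin n)),
            (α p.1 * α p.2) • (x p.1 * x p.2) := by
      rw [Finset.sum_product]
      exact Finset.sum_congr rfl fun i _ => Finset.sum_congr rfl fun j _ => hterm i j
    rw [this, ← Finset.diag_union_offDiag,
      Finset.sum_union (Finset.disjoint_diag_offDiag _), Finset.sum_diag]
    have hoff : (∑ p ∈ (Finset.univ : Finset (Fin n)).offDiag,
        (α p.1 * α p.2) • (x p.1 * x p.2)) = 0 := by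
      refine Finset.sum_involution (g := fun p _ => Prod.swap p) ?_ ?_ (fun p hp => ?_) ?_
      · intro p hp
        have hne : p.1 ≠ p.2 := (Finset.mem_offDiag.mp hp).2.2
        simp only [Prod.fst_swap, Prod.snd_swap]
        rw [hxx _ _ hne, smul_neg, mul_comm (α p.1)]
        ring_nf
        abel
      · intro p hp _
        have hne : p.1 ≠ p.2 := (Finset.mem_offDiag.mp hp).2.2
        intro h
        exact hne (congrArg Prod.fst h).symm
      · obtain ⟨_, _, hne⟩ := Finset.mem_offDiag.mp hp
        exact Finset.mem_offDiag.mpr ⟨Finset.mem_univ _, Finset.mem_univ _, hne.symm⟩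
      · intro p hp; rfl
    rw [hoff, add_zero]
    exact Finset.sum_congr rfl fun i _ => by rw [sq]
  have key : ∀ f : A,
      d (d f + ι f * s) + ι (d f + ι f * s) * s = f * (d s - s * s) := by
    intro f
    rw [hd_add, hd_leib, hdd, hdι, hιι, map_add, map_mul, hιι, hιs]
    noncomm_ring
  constructor
  · intro h i
    have h1 := h 1
    rw [key, one_mul, sub_eq_zero] at h1
    rw [hds, hss] at h1
    have h2 : (∑ j, (α j - α j * α j) • x j ^ 2) = 0 := by
      calc ∑ j, (α j - α j * α j) • x j ^ 2
          = ∑ j, (α j • x j ^ 2 - (α j * α j) • x j ^ 2) := by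
            exact Finset.sum_congr rfl fun j _ => by rw [sub_smul]
        _ = (∑ j, α j • x j ^ 2) - ∑ j, (α j * α j) • x j ^ 2 :=
            Finset.sum_sub_distrib _ _
        _ = 0 := by rw [h1, sub_self]
    have hz := linearIndependent_iff'.mp hli Finset.univ (fun j => α j - α j * α j) h2 i
      (Finset.mem_univ i)
    have hfac : α i * (1 - α i) = 0 := by linear_combination hz
    rcases mul_eq_zero.mp hfac with h0 | h1'
    · exact Or.inl h0
    · exact Or.inr (sub_eq_zero.mp h1').symm
  · intro h f
    rw [key]
    have : d s - s * s = 0 := by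
      rw [hds, hss, ← Finset.sum_sub_distrib]
      refine Finset.sum_eq_zero fun i _ => ?_
      rcases h i with h0 | h0 <;> simp [h0]
    rw [this, mul_zero]
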